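/- The monodromy matrix of the inhomogeneous fundamental gl(M|N) chain satisfies the RTT (FRT exchange) relation: for all u, v ∈ ℂ, R₁₂(u−v)∘𝒯₁(u)∘𝒯₂(v) = 𝒯₂(v)∘𝒯₁(u)∘R₁₂(u−v) in End(V⊗V⊗H), where, regarding V⊗V⊗H = V^{⊗(L+2)} with two auxiliary factors in positions 1,2 and quantum factors in positions 3,…,L+2, one sets 𝒯₁(u) = R_{1,3}(u−a₁)∘R_{1,4}(u−a₂)∘⋯∘R_{1,L+2}(u−a_L) and 𝒯₂(v) = R_{2,3}(v−a₁)∘R_{2,4}(v−a₂)∘⋯∘R_{2,L+2}(v−a_L) (Koszul embeddings), and R₁₂(x) = R(x)⊗id_H. -/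

import Mathlib

open scoped BigOperators

noncomputable section

namespace SuperSpin

/-- The ℤ₂-grading on `Fin n` (0-indexed): grade `0` for the first `M` indices,
grade `1` for the remaining ones.  `gr M i` is the grade of the (paper, 1-indexed)
index `i+1`. -/
def gr (M : ℕ) {n : ℕ} (i : Fin n) : ℕ := if (i : ℕ) < M then 0 else 1

/-- `End(V ⊗ V)` for `V = ℂⁿ`, as matrices indexed by pairs. -/
abbrev E2 (n : ℕ) := Matrix (Fin n × Fin n) (Fin n × Fin n) ℂ

/-- The graded permutation operator `P (e_c ⊗ e_d) = (-1)^{[c][d]} e_d ⊗ e_c`. -/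
def Pm (M n : ℕ) : E2 n :=
  Matrix.of fun p q =>
    if p.1 = q.2 ∧ p.2 = q.1 then ((-1 : ℂ) ^ (gr M q.1 * gr M q.2)) else 0

/-- The R-matrix `R(u) = u·id - hb·P`. -/
def Rm (M n : ℕ) (hb u : ℂ) : E2 n := u • (1 : E2 n) - hb • Pm M n

/-- The operator `Q (e_c ⊗ e_d) = δ_{cd} (-1)^{[d]} ∑_a e_a ⊗ e_a`. -/
def Qm (M n : ℕ) : E2 n :=
  Matrix.of fun p q => if q.1 = q.2 ∧ p.1 = p.2 then ((-1 : ℂ) ^ (gr M q.2)) else 0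

/-- Graded partial transposition in the second tensor factor. -/
def pt2 (M n : ℕ) (X : E2 n) : E2 n :=
  Matrix.of fun p q =>
    ((-1 : ℂ) ^ (gr M p.2 * gr M q.2 + gr M q.2)) * X (p.1, q.2) (q.1, p.2)

/-- Graded transposition of an `n × n` matrix: `(Aᵗ)_{ij} = (-1)^{[i][j]+[j]} A_{ji}`. -/
def gTr (M : ℕ) {n : ℕ} (A : Matrix (Fin n) (Fin n) ℂ) : Matrix (Fin n) (Fin n) ℂ :=
  Matrix.of fun i j => ((-1 : ℂ) ^ (gr M i * gr M j + gr M j)) * A j i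

/-- `A ⊗ id` acting on `V ⊗ V`. -/
def m1 {n : ℕ} (A : Matrix (Fin n) (Fin n) ℂ) : E2 n :=
  Matrix.of fun p q => A p.1 q.1 * (if p.2 = q.2 then 1 else 0)

/-- `id ⊗ A` acting on `V ⊗ V`. -/
def m2 {n : ℕ} (A : Matrix (Fin n) (Fin n) ℂ) : E2 n :=
  Matrix.of fun p q => (if p.1 = q.1 then 1 else 0) * A p.2 q.2

/-- `R₂₁(x) = P ∘ R(x) ∘ P`. -/
def R21 (M n : ℕ) (hb u : ℂ) : E2 n := Pm M n * Rm M n hb u * Pm M n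

/-- The graded reflection equation for a matrix-valued function `K`. -/
def GRE (M n : ℕ) (hb : ℂ) (K : ℂ → Matrix (Fin n) (Fin n) ℂ) : Prop :=
  ∀ u v : ℂ,
    Rm M n hb (u - v) * m1 (K u) * R21 M n hb (u + v) * m2 (K v)
      = m2 (K v) * Rm M n hb (u + v) * m1 (K u) * R21 M n hb (u - v)

/-- `End(V^{⊗m})`, with basis indexed by functions `Fin m → Fin n`. -/
abbrev Ten (n m : ℕ) := Matrix (Fin m → Fin n) (Fin m → Fin n) ℂ

/-- The Koszul embedding of `X ∈ End(V ⊗ V)` acting on the factors `i < j` of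
`V^{⊗ m}` (identity on the other factors, with the graded crossing signs produced
by conjugation with the adjacent graded permutation operators). -/
def kEmb (M n m : ℕ) (i j : Fin m) (X : E2 n) : Ten n m :=
  Matrix.of fun f g =>
    (if ∀ l, l ≠ i → l ≠ j → f l = g l then (1 : ℂ) else 0)
      * X (f i, f j) (g i, g j)
      * (-1 : ℂ) ^ ((gr M (f j) + gr M (g j)) *
          ∑ l ∈ Finset.univ.filter (fun l => i < l ∧ l < j), gr M (g l))

/-- The monodromy matrix `𝒯(u) = R_{1,2}(u-a₁) ⋯ R_{1,L+1}(u-a_L)` of the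
inhomogeneous fundamental chain, acting on `V ⊗ H = V^{⊗(L+1)}` (auxiliary space
in position `0`). -/
def Tmono (M n L : ℕ) (hb : ℂ) (a : Fin L → ℂ) (u : ℂ) : Ten n (L + 1) :=
  (List.ofFn fun k : Fin L => kEmb M n (L + 1) 0 k.succ (Rm M n hb (u - a k))).prod

/-- The block entry `X_{ab} ∈ End(H)` of an operator `X` on `V ⊗ H`. -/
def blk {n L : ℕ} (X : Ten n (L + 1)) (a b : Fin n) : Ten n L :=
  Matrix.of fun f g => X (Fin.cons a f) (Fin.cons b g)

/-- Supertrace transfer matrix `st(u) = ∑ (-1)^{[a]} 𝒯_{aa}(u)`. -/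
def stm (M n L : ℕ) (hb : ℂ) (a : Fin L → ℂ) (u : ℂ) : Ten n L :=
  ∑ i : Fin n, ((-1 : ℂ) ^ gr M i) • blk (Tmono M n L hb a u) i i

/-- Trace transfer matrix `t(u) = ∑ 𝒯_{aa}(u)`. -/
def tm (M n L : ℕ) (hb : ℂ) (a : Fin L → ℂ) (u : ℂ) : Ten n L :=
  ∑ i : Fin n, blk (Tmono M n L hb a u) i i

/-- The pseudovacuum `v⁺ = e₁ ⊗ ⋯ ⊗ e₁`. -/
def vplus (n L : ℕ) : (Fin L → Fin n) → ℂ :=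
  fun f => if ∀ l, (f l : ℕ) = 0 then 1 else 0

/-- The pseudovacuum weights `λ_j(w)` (paper index `j ≥ 1`):
`λ₁(w) = ∏ (w - a_m - hb)`, `λ_j(w) = ∏ (w - a_m)` for `j ≥ 2`. -/
def lamP (L : ℕ) (hb : ℂ) (a : Fin L → ℂ) (j : ℕ) (w : ℂ) : ℂ :=
  if j = 1 then ∏ m, (w - a m - hb) else ∏ m, (w - a m)

/-- `c_m = ∑_{l=1}^m (-1)^{[l]}` (so `c_0 = 0`). -/
def cP (M : ℕ) (m : ℕ) : ℂ := ∑ l ∈ Finset.range m, (if l < M then (1 : ℂ) else -1)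

/-- `λ'_k(w) = ∏_{m=1}^{k-1} λ_m(w + hb c_m) / ∏_{m=1}^{k} λ_m(w + hb c_{m-1})`
(paper index `k ≥ 1`). -/
def lamPr (M L : ℕ) (hb : ℂ) (a : Fin L → ℂ) (k : ℕ) (w : ℂ) : ℂ :=
  (∏ m ∈ Finset.Icc 1 (k - 1), lamP L hb a m (w + hb * cP M m)) /
    (∏ m ∈ Finset.Icc 1 k, lamP L hb a m (w + hb * cP M (m - 1)))

/-- The global generators `Δ(E_{ab}) = ∑_k E_{ab}^{(k)}` on `H = V^{⊗L}`. -/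
def Delta (M n L : ℕ) (a b : Fin n) : Ten n L :=
  ∑ k : Fin L, Matrix.of fun f g =>
    if f k = a ∧ g k = b ∧ ∀ l, l ≠ k → f l = g l then
      (-1 : ℂ) ^ ((gr M a + gr M b) *
        ∑ l ∈ Finset.univ.filter (fun l => l < k), gr M (g l))
    else 0

/-- The diagonal entry (at paper index `j`, `1 ≤ j ≤ n`) of the diagonal boundary
matrix with parameter `ξ` and blocks determined by `L₁ ≤ L₂`. -/
def kdval (ξ : ℂ) (L₁ L₂ : ℕ) (j : ℕ) (u : ℂ) : ℂ :=
  if L₁ < j ∧ j ≤ L₂ then u + ξ else ξ - u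

/-- The diagonal boundary matrix `K(u)`. -/
def Kdiag (n : ℕ) (ξ : ℂ) (L₁ L₂ : ℕ) (u : ℂ) : Matrix (Fin n) (Fin n) ℂ :=
  Matrix.diagonal fun j => kdval ξ L₁ L₂ ((j : ℕ) + 1) u

/-- An `n × n` matrix acting on the auxiliary (first) factor of `V^{⊗(L+1)}`. -/
def onAux {n L : ℕ} (A : Matrix (Fin n) (Fin n) ℂ) : Ten n (L + 1) :=
  Matrix.of fun f g => A (f 0) (g 0) * (if ∀ l, l ≠ 0 → f l = g l then 1 else 0)

/-- The double-row monodromy matrix `ℬ(u) = 𝒯(u) (K(u) ⊗ id_H) 𝒯(-u)⁻¹`. -/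
def Bmono (M n L : ℕ) (hb : ℂ) (a : Fin L → ℂ) (ξ : ℂ) (L₁ L₂ : ℕ) (u : ℂ) :
    Ten n (L + 1) :=
  Tmono M n L hb a u * onAux (Kdiag n ξ L₁ L₂ u) * (Tmono M n L hb a (-u))⁻¹

/-- The open-chain transfer matrix `b(u) = ∑ (-1)^{[a]} K⁺_{aa}(u) ℬ_{aa}(u)`. -/
def bop (M n L : ℕ) (hb : ℂ) (a : Fin L → ℂ) (ξ : ℂ) (L₁ L₂ : ℕ)
    (ξ' : ℂ) (L₁' L₂' : ℕ) (u : ℂ) : Ten n L :=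
  ∑ i : Fin n,
    (((-1 : ℂ) ^ gr M i) * Kdiag n ξ' L₁' L₂' u i i) •
      blk (Bmono M n L hb a ξ L₁ L₂ u) i i

/-- The functions `g_k(u)` of the open-chain pseudovacuum (paper index `k ≥ 1`). -/
def gP (M : ℕ) (hb ξ : ℂ) (L₁ L₂ : ℕ) (k : ℕ) (u : ℂ) : ℂ :=
  if k ≤ L₁ then ξ - u
  else if k ≤ L₂ then ξ + u - hb * cP M L₁
  else ξ - u - hb * (cP M L₁ - cP M L₂)

/-- The functions `a_k(u)` of the open-chain pseudovacuum (paper index `k ≥ 1`). -/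
def aP (M L : ℕ) (hb : ℂ) (a : Fin L → ℂ) (k : ℕ) (u : ℂ) : ℂ :=
  (if k ≤ M then (1 : ℂ) else -1) * hb *
    (2 * u * lamP L hb a k u * lamPr M L hb a k (-u)) /
    ((2 * u - hb * cP M k) * (2 * u - hb * cP M (k - 1)))

lemma gr01 (M : ℕ) {n : ℕ} (i : Fin n) : gr M i = 0 ∨ gr M i = 1 := by
  unfold gr; split <;> simp

lemma npow_congr {a b : ℕ} (h : a % 2 = b % 2) : (-1:ℂ)^a = (-1)^b := by
  rw [neg_one_pow_eq_pow_mod_two, h, ← neg_one_pow_eq_pow_mod_two]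

lemma neg_one_pow_double (x S : ℕ) : (-1:ℂ)^((x + x) * S) = 1 := by
  have h : (x+x)*S = 2*(x*S) := by ring
  rw [h, pow_mul]; norm_num

def pmE {n m : ℕ} (σ : Fin m → Fin m) (s : (Fin m → Fin n) → ℂ) : Ten n m :=
  Matrix.of fun f g => if g = f ∘ σ then s f else 0

lemma pmE_mul {n m : ℕ} (σ τ : Fin m → Fin m) (s t : (Fin m → Fin n) → ℂ) :
    pmE σ s * pmE τ t = pmE (σ ∘ τ) (fun f => s f * t (f ∘ σ)) := by
  funext f g
  rw [Matrix.mul_apply]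
  rw [Finset.sum_eq_single_of_mem (f ∘ σ) (Finset.mem_univ _)
    (fun h _ hne => by simp [pmE, hne])]
  simp [pmE, mul_ite, Function.comp_assoc]

lemma pmE_congr {n m : ℕ} {σ τ : Fin m → Fin m} {s t : (Fin m → Fin n) → ℂ}
    (h1 : σ = τ) (h2 : ∀ f, s f = t f) : pmE σ s = pmE τ t := by
  subst h1; have : s = t := funext h2; rw [this]

lemma filter_Ioo {m : ℕ} (i j : Fin m) :
    Finset.univ.filter (fun l => i < l ∧ l < j) = Finset.Ioo i j := by
  ext l; simp [Finset.mem_Ioo]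

def sgn (M : ℕ) {n m : ℕ} (i j : Fin m) (f : Fin m → Fin n) : ℂ :=
  (-1) ^ (gr M (f i) * gr M (f j) + (gr M (f i) + gr M (f j)) * ∑ l ∈ Finset.Ioo i j, gr M (f l))

lemma kEmb_P (M n m : ℕ) (i j : Fin m) (hij : i ≠ j) :
    kEmb M n m i j (Pm M n) = pmE (⇑(Equiv.swap i j)) (sgn M i j) := by
  funext f g
  simp only [kEmb, pmE, Matrix.of_apply, filter_Ioo, Pm]
  by_cases hg : g = f ∘ ⇑(Equiv.swap i j)
  · rw [if_pos hg]; subst hg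
    have hd : ∀ l, l ≠ i → l ≠ j → f l = (f ∘ ⇑(Equiv.swap i j)) l := by
      intro l hli hlj
      simp [Equiv.swap_apply_of_ne_of_ne hli hlj]
    rw [if_pos hd]
    have hi : (f ∘ ⇑(Equiv.swap i j)) i = f j := by simp
    have hj : (f ∘ ⇑(Equiv.swap i j)) j = f i := by simp
    rw [hi, hj]
    rw [if_pos ⟨rfl, rfl⟩]
    have hsum : ∑ l ∈ Finset.Ioo i j, gr M ((f ∘ ⇑(Equiv.swap i j)) l)
        = ∑ l ∈ Finset.Ioo i j, gr M (f l) := by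
      refine Finset.sum_congr rfl fun l hl => ?_
      obtain ⟨h1, h2⟩ := Finset.mem_Ioo.mp hl
      simp [Equiv.swap_apply_of_ne_of_ne (ne_of_gt h1) (ne_of_lt h2)]
    rw [hsum, sgn, one_mul, ← pow_add]
    apply npow_congr
    have : gr M (f j) * gr M (f i) = gr M (f i) * gr M (f j) := Nat.mul_comm _ _
    rw [this]
    have : gr M (f j) + gr M (f i) = gr M (f i) + gr M (f j) := Nat.add_comm _ _
    rw [this]
  · rw [if_neg hg]
    by_cases hd : ∀ l, l ≠ i → l ≠ j → f l = g l
    · by_cases hp : f i = g j ∧ f j = g i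
      · exfalso; apply hg
        funext l
        rcases eq_or_ne l i with rfl | hli
        · simp [hp.2.symm]
        rcases eq_or_ne l j with rfl | hlj
        · simp [hp.1.symm]
        · simp [Equiv.swap_apply_of_ne_of_ne hli hlj, hd l hli hlj]
      · rw [if_neg hp]; ring
    · rw [if_neg hd]; ring

lemma kEmb_one (M n m : ℕ) (i j : Fin m) : kEmb M n m i j 1 = 1 := by
  funext f g
  simp only [kEmb, Matrix.of_apply, Matrix.one_apply]
  by_cases hfg : f = g
  · subst hfg
    rw [if_pos (fun l _ _ => rfl), if_pos rfl, neg_one_pow_double]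
    simp
  · rw [if_neg hfg]
    by_cases hd : ∀ l, l ≠ i → l ≠ j → f l = g l
    · by_cases hp : ((f i, f j) : Fin n × Fin n) = (g i, g j)
      · exfalso; apply hfg
        obtain ⟨h1, h2⟩ := Prod.mk.injEq _ _ _ _ ▸ hp
        funext l
        rcases eq_or_ne l i with rfl | hli
        · exact h1
        rcases eq_or_ne l j with rfl | hlj
        · exact h2
        · exact hd l hli hlj
      · rw [if_neg hp]; ring
    · rw [if_neg hd]; ring

lemma kEmb_Rm (M n m : ℕ) (i j : Fin m) (hb w : ℂ) :
    kEmb M n m i j (Rm M n hb w)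
      = w • (1 : Ten n m) - hb • kEmb M n m i j (Pm M n) := by
  have h : kEmb M n m i j (Rm M n hb w)
      = w • kEmb M n m i j 1 - hb • kEmb M n m i j (Pm M n) := by
    funext f g
    simp only [kEmb, Rm, Matrix.of_apply, Matrix.sub_apply, Matrix.smul_apply, smul_eq_mul]
    ring
  rw [h, kEmb_one]


lemma lt01 {m : ℕ} : (0 : Fin (m+2)) < 1 := by
  rw [Fin.lt_def]; simp

lemma Ioo01 {m : ℕ} : Finset.Ioo (0 : Fin (m+2)) 1 = ∅ := by
  ext l; simp only [Finset.mem_Ioo, Finset.notMem_empty, iff_false, Fin.lt_def, Fin.val_zero, Fin.val_one]; omega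

lemma sum0k {m : ℕ} {k : Fin (m+2)} (hk : (1 : Fin (m+2)) < k) (F : Fin (m+2) → ℕ) :
    ∑ l ∈ Finset.Ioo (0 : Fin (m+2)) k, F l
      = F 1 + ∑ l ∈ Finset.Ioo (1 : Fin (m+2)) k, F l := by
  have hins : Finset.Ioo (0 : Fin (m+2)) k = insert 1 (Finset.Ioo 1 k) := by
    rw [Fin.lt_def] at hk
    ext l
    simp only [Finset.mem_Ioo, Finset.mem_insert, Fin.lt_def, Fin.ext_iff,
      Fin.val_zero, Fin.val_one] at *
    omega
  rw [hins, Finset.sum_insert (by simp)]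

lemma sum_split {m : ℕ} {i j k : Fin (m+2)} (h1 : i < j) (h2 : j < k) (F : Fin (m+2) → ℕ) :
    ∑ l ∈ Finset.Ioo i k, F l
      = (∑ l ∈ Finset.Ioo i j, F l) + F j + ∑ l ∈ Finset.Ioo j k, F l := by
  rw [Fin.lt_def] at h1 h2
  have hset : Finset.Ioo i k = Finset.Ioo i j ∪ insert j (Finset.Ioo j k) := by
    ext l
    simp only [Finset.mem_Ioo, Finset.mem_union, Finset.mem_insert, Fin.lt_def, Fin.ext_iff]
    omega
  have hdis : Disjoint (Finset.Ioo i j) (insert j (Finset.Ioo j k)) := by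
    rw [Finset.disjoint_left]
    intro a ha hb
    simp only [Finset.mem_Ioo, Finset.mem_insert, Fin.lt_def, Fin.ext_iff] at ha hb
    omega
  rw [hset, Finset.sum_union hdis, Finset.sum_insert (by simp), add_assoc]

lemma sum_comp (M : ℕ) {n m : ℕ} (f : Fin m → Fin n) (σ : Fin m → Fin m) (i j : Fin m)
    (hσ : ∀ l, i < l → l < j → σ l = l) :
    ∑ l ∈ Finset.Ioo i j, gr M ((f ∘ σ) l) = ∑ l ∈ Finset.Ioo i j, gr M (f l) :=
  Finset.sum_congr rfl fun l hl => by
    obtain ⟨h1, h2⟩ := Finset.mem_Ioo.mp hl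
    simp [hσ l h1 h2]

section Swaps
variable {m : ℕ} {k : Fin (m+2)}

lemma comp1 (hk : (1 : Fin (m+2)) < k) :
    ⇑(Equiv.swap (0 : Fin (m+2)) 1) ∘ ⇑(Equiv.swap 0 k)
      = ⇑(Equiv.swap (1 : Fin (m+2)) k) ∘ ⇑(Equiv.swap 0 1) := by
  have hk0 : k ≠ 0 := (lt01.trans hk).ne'
  have hk1 : k ≠ 1 := hk.ne'
  have h01 : (0 : Fin (m+2)) ≠ 1 := lt01.ne
  funext l
  simp only [Function.comp_apply, Equiv.swap_apply_def]
  split_ifs <;> simp_all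

lemma comp2 (hk : (1 : Fin (m+2)) < k) :
    ⇑(Equiv.swap (0 : Fin (m+2)) k) ∘ ⇑(Equiv.swap 1 k)
      = ⇑(Equiv.swap (0 : Fin (m+2)) 1) ∘ ⇑(Equiv.swap 0 k) := by
  have hk0 : k ≠ 0 := (lt01.trans hk).ne'
  have hk1 : k ≠ 1 := hk.ne'
  have h01 : (0 : Fin (m+2)) ≠ 1 := lt01.ne
  funext l
  simp only [Function.comp_apply, Equiv.swap_apply_def]
  split_ifs <;> simp_all

lemma comp3 (hk : (1 : Fin (m+2)) < k) :
    ⇑(Equiv.swap (0 : Fin (m+2)) k) ∘ ⇑(Equiv.swap 0 1)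
      = ⇑(Equiv.swap (0 : Fin (m+2)) 1) ∘ ⇑(Equiv.swap 1 k) := by
  have hk0 : k ≠ 0 := (lt01.trans hk).ne'
  have hk1 : k ≠ 1 := hk.ne'
  have h01 : (0 : Fin (m+2)) ≠ 1 := lt01.ne
  funext l
  simp only [Function.comp_apply, Equiv.swap_apply_def]
  split_ifs <;> simp_all

lemma comp4 (hk : (1 : Fin (m+2)) < k) :
    ⇑(Equiv.swap (1 : Fin (m+2)) k) ∘ ⇑(Equiv.swap 0 k)
      = ⇑(Equiv.swap (0 : Fin (m+2)) 1) ∘ ⇑(Equiv.swap 1 k) := by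
  have hk0 : k ≠ 0 := (lt01.trans hk).ne'
  have hk1 : k ≠ 1 := hk.ne'
  have h01 : (0 : Fin (m+2)) ≠ 1 := lt01.ne
  funext l
  simp only [Function.comp_apply, Equiv.swap_apply_def]
  split_ifs <;> simp_all

lemma comp5 {j : Fin (m+2)} (hj : (1 : Fin (m+2)) < j) (hk : (1 : Fin (m+2)) < k)
    (hjk : j ≠ k) :
    ⇑(Equiv.swap (0 : Fin (m+2)) j) ∘ ⇑(Equiv.swap 1 k)
      = ⇑(Equiv.swap (1 : Fin (m+2)) k) ∘ ⇑(Equiv.swap 0 j) := by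
  have hk0 : k ≠ 0 := (lt01.trans hk).ne'
  have hk1 : k ≠ 1 := hk.ne'
  have hj0 : j ≠ 0 := (lt01.trans hj).ne'
  have hj1 : j ≠ 1 := hj.ne'
  have h01 : (0 : Fin (m+2)) ≠ 1 := lt01.ne
  funext l
  simp only [Function.comp_apply, Equiv.swap_apply_def]
  split_ifs <;> simp_all

end Swaps

section SignIds
variable (M : ℕ) {n m : ℕ} {k : Fin (m+2)}

lemma sgnid1 (hk : (1 : Fin (m+2)) < k) (f : Fin (m+2) → Fin n) :
    sgn M 0 1 f * sgn M 0 k (f ∘ ⇑(Equiv.swap 0 1))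
      = sgn M 1 k f * sgn M (0 : Fin (m+2)) 1 (f ∘ ⇑(Equiv.swap 1 k)) := by
  have hk0 : k ≠ 0 := (lt01.trans hk).ne'
  have hk1 : k ≠ 1 := hk.ne'
  have h01 : (0 : Fin (m+2)) ≠ 1 := lt01.ne
  unfold sgn
  rw [Ioo01, sum0k hk, sum_comp M _ _ _ _
    (fun l h1 h2 => Equiv.swap_apply_of_ne_of_ne (lt01.trans h1).ne' h1.ne')]
  simp only [Function.comp_apply, Equiv.swap_apply_left, Equiv.swap_apply_right,
    Equiv.swap_apply_of_ne_of_ne hk0 hk1, Equiv.swap_apply_of_ne_of_ne h01 hk0.symm,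
    Finset.sum_empty]
  rw [← pow_add, ← pow_add]
  apply npow_congr
  generalize (∑ l ∈ Finset.Ioo (1 : Fin (m+2)) k, gr M (f l)) = S
  rcases gr01 M (f 0) with h0 | h0 <;> rcases gr01 M (f 1) with h1 | h1 <;>
    rcases gr01 M (f k) with h2 | h2 <;> rw [h0, h1, h2] <;> omega

lemma sgnid2 (hk : (1 : Fin (m+2)) < k) (f : Fin (m+2) → Fin n) :
    sgn M 0 k f * sgn M 1 k (f ∘ ⇑(Equiv.swap 0 k))
      = sgn M 0 1 f * sgn M (0 : Fin (m+2)) k (f ∘ ⇑(Equiv.swap 0 1)) := by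
  have hk0 : k ≠ 0 := (lt01.trans hk).ne'
  have hk1 : k ≠ 1 := hk.ne'
  have h01 : (0 : Fin (m+2)) ≠ 1 := lt01.ne
  unfold sgn
  rw [Ioo01, sum0k hk, sum0k hk,
    sum_comp M _ _ _ _
      (fun l h1 h2 => Equiv.swap_apply_of_ne_of_ne (lt01.trans h1).ne' h2.ne),
    sum_comp M _ _ _ _
      (fun l h1 h2 => Equiv.swap_apply_of_ne_of_ne (lt01.trans h1).ne' h1.ne')]
  simp only [Function.comp_apply, Equiv.swap_apply_left, Equiv.swap_apply_right,
    Equiv.swap_apply_of_ne_of_ne h01.symm hk1.symm, Equiv.swap_apply_of_ne_of_ne hk0 hk1,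
    Finset.sum_empty]
  rw [← pow_add, ← pow_add]
  apply npow_congr
  generalize (∑ l ∈ Finset.Ioo (1 : Fin (m+2)) k, gr M (f l)) = S
  rcases gr01 M (f 0) with h0 | h0 <;> rcases gr01 M (f 1) with h1 | h1 <;>
    rcases gr01 M (f k) with h2 | h2 <;> rw [h0, h1, h2] <;> omega

lemma sgnid3 (hk : (1 : Fin (m+2)) < k) (f : Fin (m+2) → Fin n) :
    sgn M 0 k f * sgn M 0 1 (f ∘ ⇑(Equiv.swap 0 k))
      = sgn M 0 1 f * sgn M (1 : Fin (m+2)) k (f ∘ ⇑(Equiv.swap 0 1)) := by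
  have hk0 : k ≠ 0 := (lt01.trans hk).ne'
  have hk1 : k ≠ 1 := hk.ne'
  have h01 : (0 : Fin (m+2)) ≠ 1 := lt01.ne
  unfold sgn
  rw [Ioo01, sum0k hk,
    sum_comp M _ _ _ _
      (fun l h1 h2 => Equiv.swap_apply_of_ne_of_ne (lt01.trans h1).ne' h1.ne')]
  simp only [Function.comp_apply, Equiv.swap_apply_left, Equiv.swap_apply_right,
    Equiv.swap_apply_of_ne_of_ne h01.symm hk1.symm, Equiv.swap_apply_of_ne_of_ne hk0 hk1,
    Finset.sum_empty]
  rw [← pow_add, ← pow_add]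
  apply npow_congr
  generalize (∑ l ∈ Finset.Ioo (1 : Fin (m+2)) k, gr M (f l)) = S
  rcases gr01 M (f 0) with h0 | h0 <;> rcases gr01 M (f 1) with h1 | h1 <;>
    rcases gr01 M (f k) with h2 | h2 <;> rw [h0, h1, h2] <;> omega

lemma sgnid4 (hk : (1 : Fin (m+2)) < k) (f : Fin (m+2) → Fin n) :
    sgn M 1 k f * sgn M 0 k (f ∘ ⇑(Equiv.swap 1 k))
      = sgn M 0 1 f * sgn M (1 : Fin (m+2)) k (f ∘ ⇑(Equiv.swap 0 1)) := by
  have hk0 : k ≠ 0 := (lt01.trans hk).ne'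
  have hk1 : k ≠ 1 := hk.ne'
  have h01 : (0 : Fin (m+2)) ≠ 1 := lt01.ne
  unfold sgn
  rw [Ioo01, sum0k hk,
    sum_comp M _ _ _ _
      (fun l h1 h2 => Equiv.swap_apply_of_ne_of_ne h1.ne' h2.ne),
    sum_comp M _ _ _ _
      (fun l h1 h2 => Equiv.swap_apply_of_ne_of_ne (lt01.trans h1).ne' h1.ne')]
  simp only [Function.comp_apply, Equiv.swap_apply_left, Equiv.swap_apply_right,
    Equiv.swap_apply_of_ne_of_ne h01 hk0.symm, Equiv.swap_apply_of_ne_of_ne hk0 hk1,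
    Finset.sum_empty]
  rw [← pow_add, ← pow_add]
  apply npow_congr
  generalize (∑ l ∈ Finset.Ioo (1 : Fin (m+2)) k, gr M (f l)) = S
  rcases gr01 M (f 0) with h0 | h0 <;> rcases gr01 M (f 1) with h1 | h1 <;>
    rcases gr01 M (f k) with h2 | h2 <;> rw [h0, h1, h2] <;> omega

end SignIds

lemma sgncomm (M : ℕ) {n m : ℕ} (j k : Fin (m+2)) (hj : (1 : Fin (m+2)) < j)
    (hk : (1 : Fin (m+2)) < k) (hjk : j ≠ k) (f : Fin (m+2) → Fin n) :
    sgn M 0 j f * sgn M 1 k (f ∘ ⇑(Equiv.swap 0 j))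
      = sgn M 1 k f * sgn M (0 : Fin (m+2)) j (f ∘ ⇑(Equiv.swap 1 k)) := by
  have hk0 : k ≠ 0 := (lt01.trans hk).ne'
  have hk1 : k ≠ 1 := hk.ne'
  have hj0 : j ≠ 0 := (lt01.trans hj).ne'
  have hj1 : j ≠ 1 := hj.ne'
  have h01 : (0 : Fin (m+2)) ≠ 1 := lt01.ne
  unfold sgn
  rcases lt_or_gt_of_ne hjk with hlt | hlt
  · -- j < k
    rw [sum0k hj, sum0k hj, sum_split hj hlt, sum_split hj hlt,
      sum_comp M _ _ 1 j
        (fun l h1 h2 => Equiv.swap_apply_of_ne_of_ne (lt01.trans h1).ne' h2.ne),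
      sum_comp M _ _ j k
        (fun l h1 h2 => Equiv.swap_apply_of_ne_of_ne ((lt01.trans hj).trans h1).ne' h1.ne'),
      sum_comp M _ _ 1 j
        (fun l h1 h2 => Equiv.swap_apply_of_ne_of_ne h1.ne' (h2.trans hlt).ne)]
    simp only [Function.comp_apply, Equiv.swap_apply_left, Equiv.swap_apply_right,
      Equiv.swap_apply_of_ne_of_ne h01.symm hj.ne, Equiv.swap_apply_of_ne_of_ne hk0 hjk.symm,
      Equiv.swap_apply_of_ne_of_ne h01 hk0.symm, Equiv.swap_apply_of_ne_of_ne hj1 hjk]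
    rw [← pow_add, ← pow_add]
    apply npow_congr
    generalize (∑ l ∈ Finset.Ioo (1 : Fin (m+2)) j, gr M (f l)) = T
    generalize (∑ l ∈ Finset.Ioo j k, gr M (f l)) = U
    rcases gr01 M (f 0) with h0 | h0 <;> rcases gr01 M (f 1) with h1 | h1 <;>
      rcases gr01 M (f j) with h2 | h2 <;> rcases gr01 M (f k) with h3 | h3 <;>
      rw [h0, h1, h2, h3] <;> omega
  · -- k < j
    rw [sum0k hj, sum0k hj, sum_split hk hlt, sum_split hk hlt,
      sum_comp M _ _ 1 k
        (fun l h1 h2 => Equiv.swap_apply_of_ne_of_ne (lt01.trans h1).ne' (h2.trans hlt).ne),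
      sum_comp M _ _ 1 k
        (fun l h1 h2 => Equiv.swap_apply_of_ne_of_ne h1.ne' h2.ne),
      sum_comp M _ _ k j
        (fun l h1 h2 => Equiv.swap_apply_of_ne_of_ne (hk.trans h1).ne' h1.ne')]
    simp only [Function.comp_apply, Equiv.swap_apply_left, Equiv.swap_apply_right,
      Equiv.swap_apply_of_ne_of_ne h01.symm hj.ne, Equiv.swap_apply_of_ne_of_ne hk0 hjk.symm,
      Equiv.swap_apply_of_ne_of_ne h01 hk0.symm, Equiv.swap_apply_of_ne_of_ne hj1 hjk]
    rw [← pow_add, ← pow_add]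
    apply npow_congr
    generalize (∑ l ∈ Finset.Ioo (1 : Fin (m+2)) k, gr M (f l)) = T
    generalize (∑ l ∈ Finset.Ioo k j, gr M (f l)) = U
    rcases gr01 M (f 0) with h0 | h0 <;> rcases gr01 M (f 1) with h1 | h1 <;>
      rcases gr01 M (f j) with h2 | h2 <;> rcases gr01 M (f k) with h3 | h3 <;>
      rw [h0, h1, h2, h3] <;> omega

section Ops
variable (M n : ℕ) {m : ℕ}

lemma PAB (k : Fin (m+2)) (hk : (1 : Fin (m+2)) < k) :
    kEmb M n (m+2) 0 1 (Pm M n) * kEmb M n (m+2) 0 k (Pm M n)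
      = kEmb M n (m+2) 1 k (Pm M n) * kEmb M n (m+2) 0 1 (Pm M n) := by
  rw [kEmb_P M n _ _ _ lt01.ne, kEmb_P M n _ _ _ (lt01.trans hk).ne,
    kEmb_P M n _ _ _ hk.ne, pmE_mul, pmE_mul]
  exact pmE_congr (comp1 hk) (sgnid1 M hk)

lemma PBC (k : Fin (m+2)) (hk : (1 : Fin (m+2)) < k) :
    kEmb M n (m+2) 0 k (Pm M n) * kEmb M n (m+2) 1 k (Pm M n)
      = kEmb M n (m+2) 0 1 (Pm M n) * kEmb M n (m+2) 0 k (Pm M n) := by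
  rw [kEmb_P M n _ _ _ lt01.ne, kEmb_P M n _ _ _ (lt01.trans hk).ne,
    kEmb_P M n _ _ _ hk.ne, pmE_mul, pmE_mul]
  exact pmE_congr (comp2 hk) (sgnid2 M hk)

lemma PBA (k : Fin (m+2)) (hk : (1 : Fin (m+2)) < k) :
    kEmb M n (m+2) 0 k (Pm M n) * kEmb M n (m+2) 0 1 (Pm M n)
      = kEmb M n (m+2) 0 1 (Pm M n) * kEmb M n (m+2) 1 k (Pm M n) := by
  rw [kEmb_P M n _ _ _ lt01.ne, kEmb_P M n _ _ _ (lt01.trans hk).ne,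
    kEmb_P M n _ _ _ hk.ne, pmE_mul, pmE_mul]
  exact pmE_congr (comp3 hk) (sgnid3 M hk)

lemma PCB (k : Fin (m+2)) (hk : (1 : Fin (m+2)) < k) :
    kEmb M n (m+2) 1 k (Pm M n) * kEmb M n (m+2) 0 k (Pm M n)
      = kEmb M n (m+2) 0 1 (Pm M n) * kEmb M n (m+2) 1 k (Pm M n) := by
  rw [kEmb_P M n _ _ _ lt01.ne, kEmb_P M n _ _ _ (lt01.trans hk).ne,
    kEmb_P M n _ _ _ hk.ne, pmE_mul, pmE_mul]
  exact pmE_congr (comp4 hk) (sgnid4 M hk)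

lemma Pcomm (j k : Fin (m+2)) (hj : (1 : Fin (m+2)) < j) (hk : (1 : Fin (m+2)) < k)
    (hjk : j ≠ k) :
    kEmb M n (m+2) 0 j (Pm M n) * kEmb M n (m+2) 1 k (Pm M n)
      = kEmb M n (m+2) 1 k (Pm M n) * kEmb M n (m+2) 0 j (Pm M n) := by
  rw [kEmb_P M n _ _ _ (lt01.trans hj).ne, kEmb_P M n _ _ _ hk.ne, pmE_mul, pmE_mul]
  exact pmE_congr (comp5 hj hk hjk) (sgncomm M j k hj hk hjk)

end Ops

lemma ybe_ring {R : Type*} [Ring R] [Module ℂ R] [IsScalarTower ℂ R R] [SMulCommClass ℂ R R]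
    (A B C : R) (x z hb : ℂ) (hAB : A*B = C*A) (hBC : B*C = A*B)
    (hBA : B*A = A*C) (hCB : C*B = A*C) :
    (x•1 - hb•A) * ((x+z)•1 - hb•B) * (z•1 - hb•C)
      = (z•1 - hb•C) * ((x+z)•1 - hb•B) * (x•1 - hb•A) := by
  have h3 : A*(B*C) = C*(B*A) := by rw [← mul_assoc, hAB, mul_assoc, ← hBA]
  simp only [sub_mul, mul_sub, smul_mul_assoc, mul_smul_comm, one_mul, mul_one,
    smul_smul, mul_assoc]
  rw [h3, hBC, hBA, hCB, ← hAB]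
  module

lemma ybe (M n : ℕ) {m : ℕ} (k : Fin (m+2)) (hk : (1 : Fin (m+2)) < k)
    (hb x y z : ℂ) (hxyz : x + z = y) :
    kEmb M n (m+2) 0 1 (Rm M n hb x) * kEmb M n (m+2) 0 k (Rm M n hb y) *
        kEmb M n (m+2) 1 k (Rm M n hb z)
      = kEmb M n (m+2) 1 k (Rm M n hb z) * kEmb M n (m+2) 0 k (Rm M n hb y) *
        kEmb M n (m+2) 0 1 (Rm M n hb x) := by
  subst hxyz
  rw [kEmb_Rm, kEmb_Rm, kEmb_Rm]
  exact ybe_ring _ _ _ x z hb (PAB M n k hk) (PBC M n k hk) (PBA M n k hk) (PCB M n k hk)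

lemma kcomm (M n : ℕ) {m : ℕ} (j k : Fin (m+2)) (hj : (1 : Fin (m+2)) < j)
    (hk : (1 : Fin (m+2)) < k) (hjk : j ≠ k) (hb w w' : ℂ) :
    kEmb M n (m+2) 0 j (Rm M n hb w) * kEmb M n (m+2) 1 k (Rm M n hb w')
      = kEmb M n (m+2) 1 k (Rm M n hb w') * kEmb M n (m+2) 0 j (Rm M n hb w) := by
  rw [kEmb_Rm, kEmb_Rm]
  simp only [sub_mul, mul_sub, smul_mul_assoc, mul_smul_comm, one_mul, mul_one, smul_smul]
  rw [Pcomm M n j k hj hk hjk]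
  module

lemma rtt_list {G : Type*} [Monoid G] :
    ∀ (L : ℕ) (A B : Fin L → G) (R : G),
      (∀ k, R * A k * B k = B k * A k * R) →
      (∀ j k, j ≠ k → A j * B k = B k * A j) →
      R * (List.ofFn A).prod * (List.ofFn B).prod
        = (List.ofFn B).prod * (List.ofFn A).prod * R := by
  intro L
  induction L with
  | zero => intro A B R _ _; simp
  | succ L ih =>
    intro A B R h1 h2
    rw [List.ofFn_succ, List.ofFn_succ, List.prod_cons, List.prod_cons]
    set PA := (List.ofFn fun i : Fin L => A i.succ).prod with hPA
    set PB := (List.ofFn fun i : Fin L => B i.succ).prod with hPB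
    have cBPA : Commute (B 0) PA := by
      apply Commute.list_prod_right
      intro x hx
      rw [List.mem_ofFn] at hx
      obtain ⟨i, rfl⟩ := hx
      exact (h2 i.succ 0 (Fin.succ_ne_zero i)).symm
    have cAPB : Commute (A 0) PB := by
      apply Commute.list_prod_right
      intro x hx
      rw [List.mem_ofFn] at hx
      obtain ⟨i, rfl⟩ := hx
      exact h2 0 i.succ (Fin.succ_ne_zero i).symm
    have ihh : R * PA * PB = PB * PA * R :=
      ih (fun i => A i.succ) (fun i => B i.succ) R (fun i => h1 i.succ)
        (fun i j hij => h2 i.succ j.succ (fun h => hij (Fin.succ_injective _ h)))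
    have e1 : PA * (B 0 * PB) = B 0 * (PA * PB) := by
      rw [← mul_assoc, ← cBPA.eq, mul_assoc]
    have e2 : A 0 * (PB * (PA * R)) = PB * (A 0 * (PA * R)) := by
      rw [← mul_assoc, cAPB.eq, mul_assoc]
    calc R * (A 0 * PA) * (B 0 * PB)
        = R * (A 0 * (PA * (B 0 * PB))) := by simp only [mul_assoc]
      _ = R * (A 0 * (B 0 * (PA * PB))) := by rw [e1]
      _ = R * A 0 * B 0 * (PA * PB) := by simp only [mul_assoc]
      _ = B 0 * A 0 * R * (PA * PB) := by rw [h1 0]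
      _ = B 0 * (A 0 * (R * PA * PB)) := by simp only [mul_assoc]
      _ = B 0 * (A 0 * (PB * PA * R)) := by rw [ihh]
      _ = B 0 * (A 0 * (PB * (PA * R))) := by simp only [mul_assoc]
      _ = B 0 * (PB * (A 0 * (PA * R))) := by rw [e2]
      _ = B 0 * PB * (A 0 * PA) * R := by simp only [mul_assoc]


/-- The RTT (FRT exchange) relation for the monodromy matrix of
the inhomogeneous fundamental chain, on `V ⊗ V ⊗ H = V^{⊗(L+2)}` with the two
auxiliary spaces in positions 1,2:
`R₁₂(u-v) 𝒯₁(u) 𝒯₂(v) = 𝒯₂(v) 𝒯₁(u) R₁₂(u-v)`. -/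
theorem statement6 (M N : ℕ) (hM : 1 ≤ M) (hN : 1 ≤ N) (hb : ℂ) (hhb : hb ≠ 0)
    (L : ℕ) (hL : 1 ≤ L) (sh : Fin L → ℂ) :
    ∀ u v : ℂ,
      kEmb M (M + N) (L + 2) 0 1 (Rm M (M + N) hb (u - v)) *
        (List.ofFn fun k : Fin L =>
          kEmb M (M + N) (L + 2) 0 k.succ.succ (Rm M (M + N) hb (u - sh k))).prod *
        (List.ofFn fun k : Fin L =>
          kEmb M (M + N) (L + 2) 1 k.succ.succ (Rm M (M + N) hb (v - sh k))).prod
      = (List.ofFn fun k : Fin L =>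
          kEmb M (M + N) (L + 2) 1 k.succ.succ (Rm M (M + N) hb (v - sh k))).prod *
        (List.ofFn fun k : Fin L =>
          kEmb M (M + N) (L + 2) 0 k.succ.succ (Rm M (M + N) hb (u - sh k))).prod *
        kEmb M (M + N) (L + 2) 0 1 (Rm M (M + N) hb (u - v)) := by

  intro u v
  have hlt : ∀ k : Fin L, (1 : Fin (L+2)) < k.succ.succ := by
    intro k
    rw [Fin.lt_def]
    simp [Fin.val_succ]
  exact rtt_list L
    (fun k => kEmb M (M + N) (L + 2) 0 k.succ.succ (Rm M (M + N) hb (u - sh k)))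
    (fun k => kEmb M (M + N) (L + 2) 1 k.succ.succ (Rm M (M + N) hb (v - sh k)))
    (kEmb M (M + N) (L + 2) 0 1 (Rm M (M + N) hb (u - v)))
    (fun k => ybe M (M + N) k.succ.succ (hlt k) hb (u - v) (u - sh k) (v - sh k) (by ring))
    (fun j k hjk => kcomm M (M + N) j.succ.succ k.succ.succ (hlt j) (hlt k)
      (fun h => hjk (Fin.succ_injective _ (Fin.succ_injective _ h))) hb (u - sh j) (v - sh k))


end SuperSpin
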